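/- arXiv:1901.09363 — 2 statements merged into one kernel-verified Lean document; each statement's English description precedes it below -/
import Mathlib

section
/- A relational structure R admits a finite monomorphic decomposition if and only if there exists an integer ℓ such that every finite induced substructure of R admits a monomorphic decomposition into at most ℓ blocks. -/
/-- A relational structure of signature `ar : ι → ℕ`: a domain `V` together with,
for each `i : ι`, an `ar i`-ary relation on `V`. -/
structure RelStruct (ι : Type) (ar : ι → ℕ) where
  V : Type
  rel : ∀ i : ι, (Fin (ar i) → V) → Prop

namespace RelStruct

variable {ι : Type} {ar : ι → ℕ}

/-- The substructure induced on a subset `A` of the domain. -/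
def restrict (R : RelStruct ι ar) (A : Set R.V) : RelStruct ι ar where
  V := A
  rel := fun i f => R.rel i fun j => (f j : R.V)

/-- Isomorphism of relational structures: a bijection of the domains transporting
each relation onto the corresponding one. -/
def Iso (R S : RelStruct ι ar) : Prop :=
  ∃ e : R.V ≃ S.V, ∀ (i : ι) (f : Fin (ar i) → R.V), R.rel i f ↔ S.rel i fun j => e (f j)

/-- `R` embeds in `S` if `R` is isomorphic to an induced substructure of `S`. -/
def Embeds (R S : RelStruct ι ar) : Prop :=
  ∃ A : Set S.V, Iso R (S.restrict A)

/-- `B` is a monomorphic part of `R`: any two finite subsets of the domain of the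
same cardinality which agree outside `B` induce isomorphic substructures. -/
def MonoPart (R : RelStruct ι ar) (B : Set R.V) : Prop :=
  ∀ A A' : Set R.V, A.Finite → A'.Finite → A.ncard = A'.ncard →
    A \ B = A' \ B → Iso (R.restrict A) (R.restrict A')

/-- A monomorphic decomposition of `R`: a partition of the domain into monomorphic parts. -/
def MonoDecomp (R : RelStruct ι ar) (P : Set (Set R.V)) : Prop :=
  Setoid.IsPartition P ∧ ∀ B ∈ P, R.MonoPart B

/-- `R` has a monomorphic decomposition with finitely many blocks. -/
def HasFiniteMonoDecomp (R : RelStruct ι ar) : Prop :=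
  ∃ P : Set (Set R.V), R.MonoDecomp P ∧ P.Finite

/-- The age of `R`: the class of finite structures embeddable in `R`. -/
def Age (R : RelStruct ι ar) : Set (RelStruct ι ar) :=
  {S | Finite S.V ∧ Embeds S R}

/-- A hereditary class of finite structures: all members are finite, and every
structure embeddable in a member is again a member. -/
def Hereditary (C : Set (RelStruct ι ar)) : Prop :=
  (∀ R ∈ C, Finite R.V) ∧ ∀ R ∈ C, ∀ S : RelStruct ι ar, Embeds S R → S ∈ C

/-- `x` and `y` are `F`-equivalent: the substructures induced on `{x} ∪ F` and
`{y} ∪ F` are isomorphic. -/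
def EqF (R : RelStruct ι ar) (F : Set R.V) (x y : R.V) : Prop :=
  Iso (R.restrict (insert x F)) (R.restrict (insert y F))

/-- `x ≃_{m,R} y`: `x` and `y` are `F`-equivalent for every `m`-element subset `F`
of `V \ {x, y}`. -/
def EqM (R : RelStruct ι ar) (m : ℕ) (x y : R.V) : Prop :=
  ∀ F : Set R.V, F.Finite → F.ncard = m → x ∉ F → y ∉ F → EqF R F x y

/-- `x ≃_{≤m,R} y`: `x ≃_{m',R} y` for every `m' ≤ m`. -/
def EqLe (R : RelStruct ι ar) (m : ℕ) (x y : R.V) : Prop :=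
  ∀ m' ≤ m, EqM R m' x y

/-- `x ≃_R y`: `x ≃_{m,R} y` for every `m`. -/
def EqR (R : RelStruct ι ar) (x y : R.V) : Prop :=
  ∀ m : ℕ, EqM R m x y

/-- The profile of `R`: the number of induced substructures on `n`-element subsets
of the domain, counted up to isomorphism. -/
noncomputable def profileR (R : RelStruct ι ar) (n : ℕ) : ℕ :=
  Nat.card (Quot fun (A B : {A : Set R.V // A.Finite ∧ A.ncard = n}) =>
    Iso (R.restrict A.1) (R.restrict B.1))

end RelStruct
namespace RelStruct
variable {ι : Type} {ar : ι → ℕ}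

theorem iso_refl (R : RelStruct ι ar) : Iso R R :=
  ⟨Equiv.refl _, fun _ _ => Iff.rfl⟩

theorem Iso.symm {R S : RelStruct ι ar} (h : Iso R S) : Iso S R := by
  obtain ⟨e, he⟩ := h
  exact ⟨e.symm, fun i f => by rw [he i (fun j => e.symm (f j))]; simp⟩

theorem Iso.trans {R S T : RelStruct ι ar} (h : Iso R S) (h' : Iso S T) : Iso R T := by
  obtain ⟨e, he⟩ := h; obtain ⟨e', he'⟩ := h'
  exact ⟨e.trans e', fun i f => (he i f).trans (he' i _)⟩

theorem iso_restrict_restrict (R : RelStruct ι ar) (A : Set R.V)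
    (S : Set (R.restrict A).V) :
    Iso ((R.restrict A).restrict S) (R.restrict (Subtype.val '' S)) := by
  refine ⟨Equiv.Set.image Subtype.val S Subtype.val_injective, fun i f => ?_⟩
  simp only [restrict, Equiv.Set.image_apply]
  exact Iff.rfl
theorem EqR.refl (R : RelStruct ι ar) (x : R.V) : EqR R x x :=
  fun _ _ _ _ _ _ => iso_refl _

theorem EqR.symm {R : RelStruct ι ar} {x y : R.V} (h : EqR R x y) : EqR R y x :=
  fun m F hF hc hx hy => (h m F hF hc hy hx).symm

theorem EqR.trans {R : RelStruct ι ar} {x y z : R.V} (hxy : EqR R x y)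
    (hyz : EqR R y z) : EqR R x z := by
  intro m F hF hc hx hz
  by_cases hxz : x = z
  · subst hxz; exact iso_refl _
  by_cases hy : y ∈ F
  · -- the subtle case
    have hxy' : x ≠ y := fun h => hx (h ▸ hy)
    have hzy' : z ≠ y := fun h => hz (h ▸ hy)
    set F₀ := F \ {y} with hF₀
    have hyF₀ : y ∉ F₀ := fun h => h.2 rfl
    have hxF₀ : x ∉ F₀ := fun h => hx h.1
    have hzF₀ : z ∉ F₀ := fun h => hz h.1
    have hins : insert y F₀ = F := by
      rw [hF₀, Set.insert_diff_singleton, Set.insert_eq_self.2 hy]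
    have hF₀fin : F₀.Finite := hF.diff
    -- Step 1 : use y ~ z with base G = insert x F₀
    have step1 := hyz (insert x F₀).ncard (insert x F₀) (hF₀fin.insert x) rfl
      (fun h => by rcases h with h | h; exact hxy' h.symm; exact hyF₀ h)
      (fun h => by rcases h with h | h; exact hxz h.symm; exact hzF₀ h)
    -- Step 2 : use x ~ y with base H = insert z F₀
    have step2 := hxy (insert z F₀).ncard (insert z F₀) (hF₀fin.insert z) rfl
      (fun h => by rcases h with h | h; exact hxz h; exact hxF₀ h)
      (fun h => by rcases h with h | h; exact hzy' h.symm; exact hyF₀ h)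
    unfold EqF at step1 step2 ⊢
    have e1 : insert y (insert x F₀) = insert x F := by
      rw [Set.insert_comm, hins]
    have e2 : insert y (insert z F₀) = insert z F := by
      rw [Set.insert_comm, hins]
    have e3 : insert x (insert z F₀) = insert z (insert x F₀) := Set.insert_comm _ _ _
    rw [e1] at step1
    rw [e2, e3] at step2
    exact step1.trans step2
  · exact (hxy m F hF hc hx hy).trans (hyz m F hF hc hy hz)
theorem monoPart_of_pairwise_eqR {R : RelStruct ι ar} {C : Set R.V}
    (hC : ∀ u ∈ C, ∀ v ∈ C, EqR R u v) : MonoPart R C := by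
  have key : ∀ n : ℕ, ∀ A A' : Set R.V, A.Finite → A'.Finite →
      A.ncard = A'.ncard → A \ C = A' \ C → (A \ A').ncard ≤ n →
      Iso (R.restrict A) (R.restrict A') := by
    intro n
    induction n with
    | zero =>
      intro A A' hA hA' hcard hdiff hd
      have hsub : A ⊆ A' := by
        rw [← Set.diff_eq_empty, ← Set.ncard_eq_zero hA.diff]
        omega
      have : A = A' := Set.eq_of_subset_of_ncard_le hsub (le_of_eq hcard.symm) hA'
      rw [this]; exact iso_refl _
    | succ n ih =>
      intro A A' hA hA' hcard hdiff hd
      by_cases hAA : A \ A' = ∅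
      · have hsub : A ⊆ A' := Set.diff_eq_empty.1 hAA
        have : A = A' := Set.eq_of_subset_of_ncard_le hsub (le_of_eq hcard.symm) hA'
        rw [this]; exact iso_refl _
      · obtain ⟨a, ha⟩ := Set.nonempty_iff_ne_empty.2 hAA
        have haC : a ∈ C := by
          by_contra h
          have : a ∈ A \ C := ⟨ha.1, h⟩
          rw [hdiff] at this
          exact ha.2 this.1
        -- A' \ A is nonempty since ncards are equal
        have hA'A : (A' \ A).Nonempty := by
          rw [Set.nonempty_iff_ne_empty]
          intro h
          have hsub : A' ⊆ A := Set.diff_eq_empty.1 h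
          have : A' = A := Set.eq_of_subset_of_ncard_le hsub (le_of_eq hcard) hA
          subst this
          exact ha.2 ha.1
        obtain ⟨a', ha'⟩ := hA'A
        have ha'C : a' ∈ C := by
          by_contra h
          have : a' ∈ A' \ C := ⟨ha'.1, h⟩
          rw [← hdiff] at this
          exact ha'.2 this.1
        have haa' : EqR R a a' := hC a haC a' ha'C
        set F := A \ {a} with hFdef
        have hFfin : F.Finite := hA.diff
        have haF : a ∉ F := fun h => h.2 rfl
        have ha'F : a' ∉ F := fun h => ha'.2 h.1
        have step1 : Iso (R.restrict A) (R.restrict (insert a' F)) := by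
          have := haa' F.ncard F hFfin rfl haF ha'F
          unfold EqF at this
          rwa [Set.insert_diff_singleton, Set.insert_eq_self.2 ha.1] at this
        set A₂ := insert a' F with hA₂def
        have hA₂fin : A₂.Finite := hFfin.insert _
        have hAne : A.Nonempty := ⟨a, ha.1⟩
        have hcard2 : A₂.ncard = A'.ncard := by
          rw [hA₂def, Set.ncard_insert_of_notMem ha'F hFfin, hFdef,
            Set.ncard_diff_singleton_of_mem ha.1, ← hcard]
          have : 0 < A.ncard := (Set.ncard_pos hA).2 hAne
          omega
        have hdiff2 : A₂ \ C = A' \ C := by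
          have h1 : (A \ C) \ {a} = A \ C := Set.diff_singleton_eq_self (fun h => h.2 haC)
          rw [hA₂def, Set.insert_diff_of_mem _ ha'C, hFdef, Set.diff_diff_comm, h1, hdiff]
        have hd2 : (A₂ \ A').ncard ≤ n := by
          have he : A₂ \ A' = (A \ A') \ {a} := by
            rw [hA₂def, Set.insert_diff_of_mem _ ha'.1, hFdef, Set.diff_diff_comm]
          rw [he, Set.ncard_diff_singleton_of_mem ha]
          omega
        exact step1.trans (ih A₂ A' hA₂fin hA' hcard2 hdiff2 hd2)
  intro A A' hA hA' hcard hdiff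
  exact key (A \ A').ncard A A' hA hA' hcard hdiff le_rfl
theorem MonoPart.restrict {R : RelStruct ι ar} {B : Set R.V} (hB : MonoPart R B)
    (A : Set R.V) : MonoPart (R.restrict A) (Subtype.val ⁻¹' B) := by
  intro A₁ A₂ h1 h2 hc hd
  have i1 := iso_restrict_restrict R A A₁
  have i2 := iso_restrict_restrict R A A₂
  have hd' : Subtype.val '' A₁ \ B = Subtype.val '' A₂ \ B := by
    erw [← Set.image_diff_preimage, ← Set.image_diff_preimage, hd]
    rfl
  have main := hB (Subtype.val '' A₁) (Subtype.val '' A₂) (h1.image _) (h2.image _)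
    (by erw [Set.ncard_image_of_injective _ Subtype.val_injective,
      Set.ncard_image_of_injective _ Subtype.val_injective, hc]; rfl) hd'
  exact i1.trans (main.trans i2.symm)

theorem forward_dir {R : RelStruct ι ar} {P : Set (Set R.V)}
    (hP : MonoDecomp R P) (A : Set R.V) :
    ∃ Q : Set (Set (R.restrict A).V),
      (R.restrict A).MonoDecomp Q ∧ Q ⊆ (fun B => Subtype.val ⁻¹' B) '' P := by
  classical
  refine ⟨{C | C.Nonempty ∧ ∃ B ∈ P, C = Subtype.val ⁻¹' B}, ⟨⟨?_, ?_⟩, ?_⟩, ?_⟩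
  · rintro ⟨h, -⟩; exact Set.not_nonempty_empty h
  · intro a
    obtain ⟨B, ⟨hBP, haB⟩, huniq⟩ := hP.1.2 a.1
    refine ⟨Subtype.val ⁻¹' B, ⟨⟨⟨a, haB⟩, B, hBP, rfl⟩, haB⟩, ?_⟩
    rintro C ⟨⟨-, B', hB'P, rfl⟩, haB'⟩
    rw [huniq B' ⟨hB'P, haB'⟩]
    rfl
  · rintro C ⟨-, B, hBP, rfl⟩
    exact (hP.2 B hBP).restrict A
  · rintro C ⟨-, B, hBP, rfl⟩
    exact ⟨B, hBP, rfl⟩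
theorem monoPart_eqF {S : RelStruct ι ar} {B : Set S.V} (hB : MonoPart S B)
    {x y : S.V} (hx : x ∈ B) (hy : y ∈ B) {F : Set S.V} (hF : F.Finite)
    (hxF : x ∉ F) (hyF : y ∉ F) : EqF S F x y := by
  apply hB (insert x F) (insert y F) (hF.insert _) (hF.insert _)
  · rw [Set.ncard_insert_of_notMem hxF hF, Set.ncard_insert_of_notMem hyF hF]
  · rw [Set.insert_diff_of_mem _ hx, Set.insert_diff_of_mem _ hy]

theorem eqF_of_restrict {R : RelStruct ι ar} {A F : Set R.V} (hFA : F ⊆ A)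
    (x y : A) (h : EqF (R.restrict A) (Subtype.val ⁻¹' F) x y) :
    EqF R F x.1 y.1 := by
  have i1 := iso_restrict_restrict R A (insert x (Subtype.val ⁻¹' F))
  have i2 := iso_restrict_restrict R A (insert y (Subtype.val ⁻¹' F))
  have key : ∀ z : A, Subtype.val '' (insert z (Subtype.val ⁻¹' F))
      = insert z.1 F := by
    intro z
    rw [Set.image_insert_eq, Subtype.image_preimage_coe,
      Set.inter_eq_self_of_subset_right hFA]
  erw [key x] at i1
  erw [key y] at i2
  exact i1.symm.trans (h.trans i2)

theorem no_big_family {R : RelStruct ι ar} {ℓ : ℕ}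
    (hℓ : ∀ A : Set R.V, A.Finite →
      ∃ P : Set (Set (R.restrict A).V),
        (R.restrict A).MonoDecomp P ∧ P.Finite ∧ P.ncard ≤ ℓ)
    (x : Fin (ℓ + 1) → R.V) (hx : ∀ i j, i ≠ j → ¬ EqR R (x i) (x j)) :
    False := by
  classical
  have hw : ∀ i j : Fin (ℓ + 1), i ≠ j → ∃ F : Set R.V,
      F.Finite ∧ x i ∉ F ∧ x j ∉ F ∧ ¬ EqF R F (x i) (x j) := by
    intro i j hij
    have h := hx i j hij
    unfold EqR EqM at h
    push_neg at h
    obtain ⟨m, F, hF, _, hxi, hxj, hne⟩ := h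
    exact ⟨F, hF, hxi, hxj, hne⟩
  let F : Fin (ℓ + 1) → Fin (ℓ + 1) → Set R.V := fun i j =>
    if h : i ≠ j then (hw i j h).choose else ∅
  have hFfin : ∀ i j, (F i j).Finite := by
    intro i j
    simp only [F]
    split
    · exact (hw i j ‹_›).choose_spec.1
    · exact Set.finite_empty
  set A : Set R.V := Set.range x ∪ ⋃ i, ⋃ j, F i j with hAdef
  have hAfin : A.Finite :=
    (Set.finite_range x).union
      (Set.finite_iUnion fun i => Set.finite_iUnion fun j => hFfin i j)
  obtain ⟨P, hP, hPfin, hPcard⟩ := hℓ A hAfin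
  have hxA : ∀ i, x i ∈ A := fun i => Or.inl ⟨i, rfl⟩
  have hblock : ∀ i : Fin (ℓ + 1), ∃ B, B ∈ P ∧ (⟨x i, hxA i⟩ : A) ∈ B :=
    fun i => (hP.1.2 ⟨x i, hxA i⟩).exists
  choose b hbP hbmem using hblock
  -- pigeonhole
  haveI := hPfin.fintype
  have hcard : Fintype.card P < Fintype.card (Fin (ℓ + 1)) := by
    rw [Fintype.card_fin]
    have : Fintype.card P = P.ncard := (Nat.card_coe_set_eq P) ▸
      (Nat.card_eq_fintype_card).symm
    omega
  obtain ⟨i, j, hij, hbeq⟩ :=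
    Fintype.exists_ne_map_eq_of_card_lt (fun i => (⟨b i, hbP i⟩ : P)) hcard
  have hbij : b i = b j := congrArg Subtype.val hbeq
  -- the witness set
  have hijne : i ≠ j := hij
  obtain ⟨hGfin, hGxi, hGxj, hGne⟩ := (hw i j hijne).choose_spec
  have hFij : F i j = (hw i j hijne).choose := by simp only [F, dif_pos hijne]
  set G := F i j with hGdef
  rw [← hFij] at hGfin hGxi hGxj hGne
  have hGA : G ⊆ A := fun v hv => Or.inr (Set.mem_iUnion.2 ⟨i, Set.mem_iUnion.2 ⟨j, hv⟩⟩)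
  -- same block ⟹ EqF in the restriction
  have hmono := hP.2 (b i) (hbP i)
  have hG'fin : (Subtype.val ⁻¹' G : Set (R.restrict A).V).Finite :=
    hGfin.preimage (Subtype.val_injective.injOn)
  have hEqF := monoPart_eqF hmono (hbmem i) (hbij ▸ hbmem j) hG'fin
    (fun h => hGxi h) (fun h => hGxj h)
  exact hGne (eqF_of_restrict hGA _ _ hEqF)
end RelStruct

open RelStruct

/-- A relational structure `R` admits a finite monomorphic decomposition iff
there is an integer `ℓ` such that every finite induced substructure of `R` admits a
monomorphic decomposition into at most `ℓ` blocks. -/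
theorem hasFiniteMonoDecomp_iff_bounded_on_finite_restrictions
    {ι : Type} {ar : ι → ℕ} (R : RelStruct ι ar) :
    R.HasFiniteMonoDecomp ↔
      ∃ ℓ : ℕ, ∀ A : Set R.V, A.Finite →
        ∃ P : Set (Set (R.restrict A).V),
          (R.restrict A).MonoDecomp P ∧ P.Finite ∧ P.ncard ≤ ℓ := by
  constructor
  · rintro ⟨P, hP, hPfin⟩
    refine ⟨P.ncard, fun A _ => ?_⟩
    obtain ⟨Q, hQ, hQsub⟩ := forward_dir hP A
    have hQfin : Q.Finite := (hPfin.image _).subset hQsub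
    refine ⟨Q, hQ, hQfin, ?_⟩
    exact le_trans (Set.ncard_le_ncard hQsub (hPfin.image _)) (Set.ncard_image_le hPfin)
  · rintro ⟨ℓ, hℓ⟩
    classical
    let s : Setoid R.V := ⟨EqR R, ⟨EqR.refl R, EqR.symm, EqR.trans⟩⟩
    have hfinQ : Finite (Quotient s) := by
      by_contra hinf
      rw [not_finite_iff_infinite] at hinf
      let e := Infinite.natEmbedding (Quotient s)
      refine no_big_family hℓ (fun i : Fin (ℓ + 1) => (e i.1).out) ?_
      intro i j hij h
      have : e i.1 = e j.1 := by
        rw [← Quotient.out_eq (e i.1), ← Quotient.out_eq (e j.1)]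
        exact Quotient.sound h
      exact hij (Fin.val_injective (e.injective this))
    refine ⟨s.classes, ⟨Setoid.isPartition_classes s, ?_⟩, ?_⟩
    · rintro B ⟨y, rfl⟩
      apply monoPart_of_pairwise_eqR
      intro u hu v hv
      exact EqR.trans hu (EqR.symm hv)
    · have hsub : s.classes ⊆ Set.range (fun q : Quotient s => {x | s.r x q.out}) := by
        rintro B ⟨y, rfl⟩
        refine ⟨Quotient.mk s y, ?_⟩
        have hout : EqR R (Quotient.mk s y).out y :=
          Quotient.exact (Quotient.out_eq (Quotient.mk s y))
        ext u
        simp only [Set.mem_setOf_eq]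
        constructor
        · intro h
          exact EqR.trans h hout
        · intro h
          exact EqR.trans h (EqR.symm hout)
      exact (Set.finite_range _).subset hsub
end

section
/- For every ordered binary structure R = (V, ≤, (ρ_i)_{i∈I}), the equivalence relations ≃_{≤2,R} and ≃_R coincide: for all x, y ∈ V, x ≃_{≤2,R} y if and only if x ≃_R y. -/
/-- An ordered binary structure: a domain `V`, a linear order `le` on `V`,
and a family of binary relations `rel i` on `V` indexed by `ι`. -/
structure OrdBin (ι : Type) where
  V : Type
  le : V → V → Prop
  linear : IsLinearOrder V le
  rel : ι → V → V → Prop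

namespace OrdBin

variable {ι : Type}

/-- The substructure induced on a subset `A` of the domain. -/
def restrict (R : OrdBin ι) (A : Set R.V) : OrdBin ι where
  V := A
  le := fun a b => R.le a.1 b.1
  linear := by
    haveI := R.linear
    exact
      { refl := fun a => refl_of R.le a.1
        trans := fun a b c hab hbc => trans_of R.le hab hbc
        antisymm := fun a b hab hba => Subtype.ext (antisymm_of R.le hab hba)
        total := fun a b => total_of R.le a.1 b.1 }
  rel := fun i a b => R.rel i a.1 b.1

/-- Isomorphism of ordered binary structures: a bijection of the domains preserving
the linear order and each binary relation. -/
def Iso (R S : OrdBin ι) : Prop :=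
  ∃ e : R.V ≃ S.V, (∀ x y : R.V, R.le x y ↔ S.le (e x) (e y)) ∧
    ∀ (i : ι) (x y : R.V), R.rel i x y ↔ S.rel i (e x) (e y)

/-- `R` embeds in `S` if `R` is isomorphic to an induced substructure of `S`. -/
def Embeds (R S : OrdBin ι) : Prop :=
  ∃ A : Set S.V, Iso R (S.restrict A)

/-- `B` is a monomorphic part of `R`: any two finite subsets of the domain of the
same cardinality which agree outside `B` induce isomorphic substructures. -/
def MonoPart (R : OrdBin ι) (B : Set R.V) : Prop :=
  ∀ A A' : Set R.V, A.Finite → A'.Finite → A.ncard = A'.ncard →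
    A \ B = A' \ B → Iso (R.restrict A) (R.restrict A')

/-- A monomorphic decomposition of `R`: a partition of the domain into monomorphic parts. -/
def MonoDecomp (R : OrdBin ι) (P : Set (Set R.V)) : Prop :=
  Setoid.IsPartition P ∧ ∀ B ∈ P, R.MonoPart B

/-- `R` has a monomorphic decomposition with finitely many blocks. -/
def HasFiniteMonoDecomp (R : OrdBin ι) : Prop :=
  ∃ P : Set (Set R.V), R.MonoDecomp P ∧ P.Finite

/-- A hereditary class of finite ordered binary structures. -/
def Hereditary (C : Set (OrdBin ι)) : Prop :=
  (∀ R ∈ C, Finite R.V) ∧ ∀ R ∈ C, ∀ S : OrdBin ι, Embeds S R → S ∈ C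

/-- `x` and `y` are `F`-equivalent: the substructures induced on `{x} ∪ F` and
`{y} ∪ F` are isomorphic. -/
def EqF (R : OrdBin ι) (F : Set R.V) (x y : R.V) : Prop :=
  Iso (R.restrict (insert x F)) (R.restrict (insert y F))

/-- `x ≃_{m,R} y`: `x` and `y` are `F`-equivalent for every `m`-element subset `F`
of `V \ {x, y}`. -/
def EqM (R : OrdBin ι) (m : ℕ) (x y : R.V) : Prop :=
  ∀ F : Set R.V, F.Finite → F.ncard = m → x ∉ F → y ∉ F → EqF R F x y

/-- `x ≃_{≤m,R} y`: `x ≃_{m',R} y` for every `m' ≤ m`. -/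
def EqLe (R : OrdBin ι) (m : ℕ) (x y : R.V) : Prop :=
  ∀ m' ≤ m, EqM R m' x y

/-- `x ≃_R y`: `x ≃_{m,R} y` for every `m`. -/
def EqR (R : OrdBin ι) (x y : R.V) : Prop :=
  ∀ m : ℕ, EqM R m x y

/-- `d(x,y) = d(x',y')`: the pair of truth values `(ρ_i(x,y), ρ_i(y,x))` agrees with
`(ρ_i(x',y'), ρ_i(y',x'))` for every `i`. -/
def dEq (R : OrdBin ι) (x y x' y' : R.V) : Prop :=
  ∀ i : ι, (R.rel i x y ↔ R.rel i x' y') ∧ (R.rel i y x ↔ R.rel i y' x')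

/-- `A` is an interval of the linear order `(V, le)`. -/
def IntervalLe (R : OrdBin ι) (A : Set R.V) : Prop :=
  ∀ u ∈ A, ∀ w ∈ A, ∀ z : R.V, R.le u z → R.le z w → z ∈ A

/-- `A` is an interval of `R`: an interval of the order such that all elements of `A`
have the same relations to each element outside `A`. -/
def IntervalR (R : OrdBin ι) (A : Set R.V) : Prop :=
  IntervalLe R A ∧ ∀ u ∈ A, ∀ u' ∈ A, ∀ w ∉ A, dEq R u w u' w

/-- `R` is `n`-monomorphic: the substructures induced on any two `n`-element subsets
of the domain are isomorphic. -/
def NMono (R : OrdBin ι) (n : ℕ) : Prop :=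
  ∀ A A' : Set R.V, A.Finite → A'.Finite → A.ncard = n → A'.ncard = n →
    Iso (R.restrict A) (R.restrict A')

/-- `R` is `(≤n)`-monomorphic. -/
def LeMono (R : OrdBin ι) (n : ℕ) : Prop :=
  ∀ m ≤ n, NMono R m

/-- `R` is monomorphic. -/
def Mono (R : OrdBin ι) : Prop :=
  ∀ n : ℕ, NMono R n

/-- The profile of `R`: the number of induced substructures on `n`-element subsets
of the domain, counted up to isomorphism. -/
noncomputable def profileR (R : OrdBin ι) (n : ℕ) : ℕ :=
  Nat.card (Quot fun (A B : {A : Set R.V // A.Finite ∧ A.ncard = n}) =>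
    Iso (R.restrict A.1) (R.restrict B.1))

/-- The profile of a class `C`: the number of members of `C` with exactly `n`
elements, counted up to isomorphism. -/
noncomputable def profileC (C : Set (OrdBin ι)) (n : ℕ) : ℕ :=
  Nat.card (Quot fun (R S : {R : OrdBin ι // R ∈ C ∧ Nat.card R.V = n}) =>
    Iso R.1 S.1)

end OrdBin

/-- The Fibonacci sequence with `F 0 = F 1 = 1`. -/
def fib1 : ℕ → ℕ
  | 0 => 1
  | 1 => 1
  | n + 2 => fib1 (n + 1) + fib1 n

namespace OrdBin

variable {ι : Type}

lemma iso_refl' (R : OrdBin ι) : Iso R R :=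
  ⟨Equiv.refl _, fun _ _ => Iff.rfl, fun _ _ _ => Iff.rfl⟩

lemma iso_symm' {R S : OrdBin ι} (h : Iso R S) : Iso S R := by
  obtain ⟨e, ho, hr⟩ := h
  refine ⟨e.symm, fun a b => ?_, fun i a b => ?_⟩
  · rw [ho (e.symm a) (e.symm b), e.apply_symm_apply, e.apply_symm_apply]
  · rw [hr i (e.symm a) (e.symm b), e.apply_symm_apply, e.apply_symm_apply]

lemma dEq_refl' (R : OrdBin ι) (p q : R.V) : dEq R p q p q := fun _ => ⟨Iff.rfl, Iff.rfl⟩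

lemma dEq_symm' {R : OrdBin ι} {p q p' q' : R.V} (h : dEq R p q p' q') : dEq R p' q' p q :=
  fun i => ⟨(h i).1.symm, (h i).2.symm⟩

lemma dEq_trans' {R : OrdBin ι} {p q p' q' p'' q'' : R.V} (h : dEq R p q p' q')
    (h' : dEq R p' q' p'' q'') : dEq R p q p'' q'' :=
  fun i => ⟨(h i).1.trans (h' i).1, (h i).2.trans (h' i).2⟩

lemma iso_force_min {R : OrdBin ι} {A B : Set R.V} (e : ↥A ≃ ↥B)
    (hord : ∀ p q : ↥A, R.le p.1 q.1 ↔ R.le (e p).1 (e q).1)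
    {a : R.V} (ha : a ∈ A) {b : R.V} (hb : b ∈ B)
    (hamin : ∀ c ∈ A, R.le a c) (hbmin : ∀ c ∈ B, R.le b c) :
    (e ⟨a, ha⟩).1 = b := by
  haveI := R.linear
  have h1 : R.le b (e ⟨a, ha⟩).1 := hbmin _ (e ⟨a, ha⟩).2
  have h2 : R.le (e ⟨a, ha⟩).1 b := by
    have h3 : R.le a (e.symm ⟨b, hb⟩).1 := hamin _ (e.symm ⟨b, hb⟩).2
    have h4 := (hord ⟨a, ha⟩ (e.symm ⟨b, hb⟩)).mp h3
    rwa [e.apply_symm_apply] at h4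
  exact antisymm_of R.le h2 h1

lemma iso_force_max {R : OrdBin ι} {A B : Set R.V} (e : ↥A ≃ ↥B)
    (hord : ∀ p q : ↥A, R.le p.1 q.1 ↔ R.le (e p).1 (e q).1)
    {a : R.V} (ha : a ∈ A) {b : R.V} (hb : b ∈ B)
    (hamax : ∀ c ∈ A, R.le c a) (hbmax : ∀ c ∈ B, R.le c b) :
    (e ⟨a, ha⟩).1 = b := by
  haveI := R.linear
  have h1 : R.le (e ⟨a, ha⟩).1 b := hbmax _ (e ⟨a, ha⟩).2
  have h2 : R.le b (e ⟨a, ha⟩).1 := by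
    have h3 : R.le (e.symm ⟨b, hb⟩).1 a := hamax _ (e.symm ⟨b, hb⟩).2
    have h4 := (hord (e.symm ⟨b, hb⟩) ⟨a, ha⟩).mp h3
    rwa [e.apply_symm_apply] at h4
  exact antisymm_of R.le h1 h2

lemma iso_single_extract (R : OrdBin ι) {a b : R.V}
    (h : Iso (R.restrict {a}) (R.restrict {b})) : ∀ i, R.rel i a a ↔ R.rel i b b := by
  obtain ⟨e, _, hr⟩ := h
  intro i
  have ha : a ∈ ({a} : Set R.V) := rfl
  have hb : (e ⟨a, ha⟩).1 = b := (e ⟨a, ha⟩).2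
  have h2 : R.rel i a a ↔ R.rel i (e ⟨a, ha⟩).1 (e ⟨a, ha⟩).1 := hr i ⟨a, ha⟩ ⟨a, ha⟩
  rwa [hb] at h2

lemma pair_extract (R : OrdBin ι) {a b a' b' : R.V} (hab : R.le a b) (hne : a ≠ b)
    (hab' : R.le a' b') (hne' : a' ≠ b')
    (h : Iso (R.restrict {a, b}) (R.restrict {a', b'})) :
    (∀ i, (R.rel i a b ↔ R.rel i a' b') ∧ (R.rel i b a ↔ R.rel i b' a')) ∧
    (∀ i, R.rel i a a ↔ R.rel i a' a') ∧ (∀ i, R.rel i b b ↔ R.rel i b' b') := by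
  haveI := R.linear
  obtain ⟨e, ho, hr⟩ := h
  have hord : ∀ p q : ↥({a, b} : Set R.V), R.le p.1 q.1 ↔ R.le (e p).1 (e q).1 := ho
  have haA : a ∈ ({a, b} : Set R.V) := Set.mem_insert _ _
  have hbA : b ∈ ({a, b} : Set R.V) := Set.mem_insert_of_mem _ rfl
  have haB : a' ∈ ({a', b'} : Set R.V) := Set.mem_insert _ _
  have hbB : b' ∈ ({a', b'} : Set R.V) := Set.mem_insert_of_mem _ rfl
  have hea : (e ⟨a, haA⟩).1 = a' := by
    refine iso_force_min e hord haA haB ?_ ?_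
    · rintro c (rfl | rfl)
      · exact refl_of R.le _
      · exact hab
    · rintro c (rfl | rfl)
      · exact refl_of R.le _
      · exact hab'
  have heb : (e ⟨b, hbA⟩).1 = b' := by
    refine iso_force_max e hord hbA hbB ?_ ?_
    · rintro c (rfl | rfl)
      · exact hab
      · exact refl_of R.le _
    · rintro c (rfl | rfl)
      · exact hab'
      · exact refl_of R.le _
  refine ⟨fun i => ⟨?_, ?_⟩, fun i => ?_, fun i => ?_⟩
  · have h2 : R.rel i a b ↔ R.rel i (e ⟨a, haA⟩).1 (e ⟨b, hbA⟩).1 := hr i ⟨a, haA⟩ ⟨b, hbA⟩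
    rwa [hea, heb] at h2
  · have h2 : R.rel i b a ↔ R.rel i (e ⟨b, hbA⟩).1 (e ⟨a, haA⟩).1 := hr i ⟨b, hbA⟩ ⟨a, haA⟩
    rwa [hea, heb] at h2
  · have h2 : R.rel i a a ↔ R.rel i (e ⟨a, haA⟩).1 (e ⟨a, haA⟩).1 := hr i ⟨a, haA⟩ ⟨a, haA⟩
    rwa [hea] at h2
  · have h2 : R.rel i b b ↔ R.rel i (e ⟨b, hbA⟩).1 (e ⟨b, hbA⟩).1 := hr i ⟨b, hbA⟩ ⟨b, hbA⟩
    rwa [heb] at h2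

lemma triple_extract (R : OrdBin ι) {a b c a' b' c' : R.V}
    (hab : R.le a b) (hbc : R.le b c) (hne1 : a ≠ b) (hne2 : b ≠ c)
    (hab' : R.le a' b') (hbc' : R.le b' c') (hne1' : a' ≠ b') (hne2' : b' ≠ c')
    (h : Iso (R.restrict {a, b, c}) (R.restrict {a', b', c'})) :
    ∀ i, (R.rel i a b ↔ R.rel i a' b') ∧ (R.rel i b a ↔ R.rel i b' a') ∧
      (R.rel i b c ↔ R.rel i b' c') ∧ (R.rel i c b ↔ R.rel i c' b') ∧
      (R.rel i a c ↔ R.rel i a' c') ∧ (R.rel i c a ↔ R.rel i c' a') ∧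
      (R.rel i a a ↔ R.rel i a' a') ∧ (R.rel i b b ↔ R.rel i b' b') ∧
      (R.rel i c c ↔ R.rel i c' c') := by
  haveI := R.linear
  obtain ⟨e, ho, hr⟩ := h
  have hord : ∀ p q : ↥({a, b, c} : Set R.V), R.le p.1 q.1 ↔ R.le (e p).1 (e q).1 := ho
  have haA : a ∈ ({a, b, c} : Set R.V) := Set.mem_insert _ _
  have hbA : b ∈ ({a, b, c} : Set R.V) := Set.mem_insert_of_mem _ (Set.mem_insert _ _)
  have hcA : c ∈ ({a, b, c} : Set R.V) :=
    Set.mem_insert_of_mem _ (Set.mem_insert_of_mem _ rfl)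
  have haB : a' ∈ ({a', b', c'} : Set R.V) := Set.mem_insert _ _
  have hbB : b' ∈ ({a', b', c'} : Set R.V) := Set.mem_insert_of_mem _ (Set.mem_insert _ _)
  have hcB : c' ∈ ({a', b', c'} : Set R.V) :=
    Set.mem_insert_of_mem _ (Set.mem_insert_of_mem _ rfl)
  have hea : (e ⟨a, haA⟩).1 = a' := by
    refine iso_force_min e hord haA haB ?_ ?_
    · rintro t (rfl | rfl | rfl)
      · exact refl_of R.le _
      · exact hab
      · exact trans_of R.le hab hbc
    · rintro t (rfl | rfl | rfl)
      · exact refl_of R.le _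
      · exact hab'
      · exact trans_of R.le hab' hbc'
  have hec : (e ⟨c, hcA⟩).1 = c' := by
    refine iso_force_max e hord hcA hcB ?_ ?_
    · rintro t (rfl | rfl | rfl)
      · exact trans_of R.le hab hbc
      · exact hbc
      · exact refl_of R.le _
    · rintro t (rfl | rfl | rfl)
      · exact trans_of R.le hab' hbc'
      · exact hbc'
      · exact refl_of R.le _
  have heb : (e ⟨b, hbA⟩).1 = b' := by
    rcases (e ⟨b, hbA⟩).2 with h1 | h1 | h1
    · exfalso
      have : e ⟨b, hbA⟩ = e ⟨a, haA⟩ := Subtype.ext (h1.trans hea.symm)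
      exact hne1 (congrArg Subtype.val (e.injective this)).symm
    · exact h1
    · exfalso
      have : e ⟨b, hbA⟩ = e ⟨c, hcA⟩ := Subtype.ext (h1.trans hec.symm)
      exact hne2 (congrArg Subtype.val (e.injective this))
  intro i
  refine ⟨?_, ?_, ?_, ?_, ?_, ?_, ?_, ?_, ?_⟩
  · have h2 : R.rel i a b ↔ R.rel i (e ⟨a, haA⟩).1 (e ⟨b, hbA⟩).1 := hr i ⟨a, haA⟩ ⟨b, hbA⟩
    rwa [hea, heb] at h2
  · have h2 : R.rel i b a ↔ R.rel i (e ⟨b, hbA⟩).1 (e ⟨a, haA⟩).1 := hr i ⟨b, hbA⟩ ⟨a, haA⟩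
    rwa [hea, heb] at h2
  · have h2 : R.rel i b c ↔ R.rel i (e ⟨b, hbA⟩).1 (e ⟨c, hcA⟩).1 := hr i ⟨b, hbA⟩ ⟨c, hcA⟩
    rwa [heb, hec] at h2
  · have h2 : R.rel i c b ↔ R.rel i (e ⟨c, hcA⟩).1 (e ⟨b, hbA⟩).1 := hr i ⟨c, hcA⟩ ⟨b, hbA⟩
    rwa [heb, hec] at h2
  · have h2 : R.rel i a c ↔ R.rel i (e ⟨a, haA⟩).1 (e ⟨c, hcA⟩).1 := hr i ⟨a, haA⟩ ⟨c, hcA⟩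
    rwa [hea, hec] at h2
  · have h2 : R.rel i c a ↔ R.rel i (e ⟨c, hcA⟩).1 (e ⟨a, haA⟩).1 := hr i ⟨c, hcA⟩ ⟨a, haA⟩
    rwa [hea, hec] at h2
  · have h2 : R.rel i a a ↔ R.rel i (e ⟨a, haA⟩).1 (e ⟨a, haA⟩).1 := hr i ⟨a, haA⟩ ⟨a, haA⟩
    rwa [hea] at h2
  · have h2 : R.rel i b b ↔ R.rel i (e ⟨b, hbA⟩).1 (e ⟨b, hbA⟩).1 := hr i ⟨b, hbA⟩ ⟨b, hbA⟩
    rwa [heb] at h2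
  · have h2 : R.rel i c c ↔ R.rel i (e ⟨c, hcA⟩).1 (e ⟨c, hcA⟩).1 := hr i ⟨c, hcA⟩ ⟨c, hcA⟩
    rwa [hec] at h2

/-- The shift map used to build the isomorphism. -/
noncomputable def shiftFn {V : Type} [LinearOrder V] (x y : V) (ch : Finset V) (t : V) : V :=
  if h : (t = x ∨ (x < t ∧ t < y)) ∧ (ch.filter fun c => t < c).Nonempty
  then (ch.filter fun c => t < c).min' h.2 else t

lemma shiftFn_pos {V : Type} [LinearOrder V] {x y t : V} {ch : Finset V}
    (h1 : t = x ∨ (x < t ∧ t < y)) (h2 : (ch.filter fun c => t < c).Nonempty) :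
    shiftFn x y ch t ∈ ch ∧ t < shiftFn x y ch t ∧
      ∀ c ∈ ch, t < c → shiftFn x y ch t ≤ c := by
  unfold shiftFn
  rw [dif_pos ⟨h1, h2⟩]
  refine ⟨(Finset.mem_filter.mp (Finset.min'_mem _ _)).1,
    (Finset.mem_filter.mp (Finset.min'_mem _ _)).2,
    fun c hc htc => Finset.min'_le _ _ (Finset.mem_filter.mpr ⟨hc, htc⟩)⟩

lemma shiftFn_neg {V : Type} [LinearOrder V] {x y t : V} {ch : Finset V}
    (h : ¬(t = x ∨ (x < t ∧ t < y))) : shiftFn x y ch t = t :=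
  dif_neg (fun hc => h hc.1)

end OrdBin
namespace OrdBin

variable {ι : Type}

lemma eqF_of_eqLe_two {R : OrdBin ι} {x y : R.V} (h2 : EqLe R 2 x y) (hxy : R.le x y)
    (F : Set R.V) (hF : F.Finite) (hxF : x ∉ F) (hyF : y ∉ F) : EqF R F x y := by
  classical
  by_cases hne : x = y
  · subst hne; exact iso_refl' _
  haveI := R.linear
  letI : LinearOrder R.V :=
    { le := R.le
      lt := fun a b => R.le a b ∧ ¬R.le b a
      le_refl := fun a => refl_of R.le a
      le_trans := fun a b c => trans_of R.le
      le_antisymm := fun a b => antisymm_of R.le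
      le_total := total_of R.le
      lt_iff_le_not_ge := fun a b => Iff.rfl
      toDecidableLE := fun a b => Classical.propDecidable _ }
  have hlt : x < y := ⟨hxy, fun h => hne (antisymm_of R.le hxy h)⟩
  -- ============ small tests ============
  have T0 : ∀ i, R.rel i x x ↔ R.rel i y y := by
    have h := h2 0 (by omega) ∅ Set.finite_empty (Set.ncard_empty _) (Set.notMem_empty x)
      (Set.notMem_empty y)
    unfold EqF at h
    rw [show insert x (∅ : Set R.V) = {x} from by simp, show insert y (∅ : Set R.V) = {y} from by simp]
      at h
    exact iso_single_extract R h
  have T1 : ∀ p, x < p → p < y →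
      (∀ i, (R.rel i x p ↔ R.rel i p y) ∧ (R.rel i p x ↔ R.rel i y p)) ∧
      (∀ i, R.rel i x x ↔ R.rel i p p) ∧ (∀ i, R.rel i p p ↔ R.rel i y y) := by
    intro p hxp hpy
    have h := h2 1 (by omega) {p} (Set.finite_singleton p) (Set.ncard_singleton p)
      (by simpa using hxp.ne) (by simpa using hpy.ne')
    unfold EqF at h
    rw [show insert y ({p} : Set R.V) = {p, y} from Set.pair_comm y p] at h
    exact pair_extract R hxp.le hxp.ne hpy.le hpy.ne h
  have Tout1 : ∀ w, w < x ∨ y < w → ∀ i,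
      (R.rel i x w ↔ R.rel i y w) ∧ (R.rel i w x ↔ R.rel i w y) := by
    intro w hw
    have hwx : w ≠ x := by rcases hw with hw | hw; exacts [hw.ne, (hlt.trans hw).ne']
    have hwy : w ≠ y := by rcases hw with hw | hw; exacts [(hw.trans hlt).ne, hw.ne']
    have h := h2 1 (by omega) {w} (Set.finite_singleton w) (Set.ncard_singleton w)
      (by simpa using hwx.symm) (by simpa using hwy.symm)
    unfold EqF at h
    rcases hw with hw | hw
    · rw [show insert x ({w} : Set R.V) = {w, x} from Set.pair_comm x w,
        show insert y ({w} : Set R.V) = {w, y} from Set.pair_comm y w] at h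
      have key := pair_extract R hw.le hw.ne (hw.trans hlt).le (hw.trans hlt).ne h
      exact fun i => ⟨(key.1 i).2, (key.1 i).1⟩
    · have key := pair_extract R (hlt.trans hw).le (hlt.trans hw).ne hw.le hw.ne h
      exact fun i => ⟨(key.1 i).1, (key.1 i).2⟩
  have Tout2 : ∀ p w, x < p → p < y → (w < x ∨ y < w) → ∀ i,
      (R.rel i x w ↔ R.rel i p w) ∧ (R.rel i w x ↔ R.rel i w p) := by
    intro p w hxp hpy hw
    have hwx : w ≠ x := by rcases hw with hw | hw; exacts [hw.ne, (hlt.trans hw).ne']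
    have hwy : w ≠ y := by rcases hw with hw | hw; exacts [(hw.trans hlt).ne, hw.ne']
    have hwp : w ≠ p := by
      rcases hw with hw | hw; exacts [(hw.trans hxp).ne, (hpy.trans hw).ne']
    have h := h2 2 (by omega) {p, w} ((Set.finite_singleton w).insert p)
      (Set.ncard_pair hwp.symm)
      (by simp only [Set.mem_insert_iff, Set.mem_singleton_iff]
          push_neg
          exact ⟨hxp.ne, hwx.symm⟩)
      (by simp only [Set.mem_insert_iff, Set.mem_singleton_iff]
          push_neg
          exact ⟨hpy.ne', hwy.symm⟩)
    unfold EqF at h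
    rcases hw with hw | hw
    · rw [show insert x ({p, w} : Set R.V) = {w, x, p} from by ext t; simp; tauto,
        show insert y ({p, w} : Set R.V) = {w, p, y} from by ext t; simp; tauto] at h
      have key := triple_extract R hw.le hxp.le hw.ne hxp.ne (hw.trans hxp).le
        hpy.le (hw.trans hxp).ne hpy.ne h
      exact fun i => ⟨(key i).2.1, (key i).1⟩
    · rw [show insert y ({p, w} : Set R.V) = {p, y, w} from by ext t; simp; tauto] at h
      have key := triple_extract R hxp.le (hpy.trans hw).le hxp.ne (hpy.trans hw).ne
        hpy.le hw.le hpy.ne hw.ne h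
      exact fun i => ⟨(key i).2.2.2.2.1, (key i).2.2.2.2.2.1⟩
  have Tin2 : ∀ p q, x < p → p < q → q < y →
      dEq R x p p q ∧ dEq R x q p y := by
    intro p q hxp hpq hqy
    have h := h2 2 (by omega) {p, q} ((Set.finite_singleton q).insert p)
      (Set.ncard_pair hpq.ne)
      (by simp only [Set.mem_insert_iff, Set.mem_singleton_iff]
          push_neg
          exact ⟨hxp.ne, (hxp.trans hpq).ne⟩)
      (by simp only [Set.mem_insert_iff, Set.mem_singleton_iff]
          push_neg
          exact ⟨(hpq.trans hqy).ne', hqy.ne'⟩)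
    unfold EqF at h
    rw [show insert y ({p, q} : Set R.V) = {p, q, y} from by ext t; simp; tauto] at h
    have key := triple_extract R hxp.le hpq.le hxp.ne hpq.ne hpq.le hqy.le hpq.ne hqy.ne h
    exact ⟨fun i => ⟨(key i).1, (key i).2.1⟩,
      fun i => ⟨(key i).2.2.2.2.1, (key i).2.2.2.2.2.1⟩⟩
  -- ============ derived facts ============
  have A1 : ∀ z, x < z → z < y → dEq R x z z y := by
    intro z h1 h2'
    exact fun i => ⟨((T1 z h1 h2').1 i).1, ((T1 z h1 h2').1 i).2⟩
  have A3 : ∀ z w, x < z → z < y → x < w → w < y → dEq R x z x w := by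
    intro z w hxz hzy hxw hwy
    rcases lt_trichotomy z w with hzw | rfl | hwz
    · exact dEq_trans' (A1 z hxz hzy) (dEq_symm' (Tin2 z w hxz hzw hwy).2)
    · exact dEq_refl' R x z
    · exact dEq_symm' (dEq_trans' (A1 w hxw hwy) (dEq_symm' (Tin2 w z hxw hwz hzy).2))
  have red : ∀ p q, x ≤ p → p < q → q ≤ y → (p ≠ x ∨ q ≠ y) →
      ∃ z, x < z ∧ z < y ∧ dEq R p q x z := by
    intro p q hxp hpq hqy hne'
    rcases eq_or_lt_of_le hxp with heq | hxp'
    · subst heq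
      have hqy' : q < y := lt_of_le_of_ne hqy (hne'.resolve_left (fun h => h rfl))
      exact ⟨q, hpq, hqy', dEq_refl' R x q⟩
    · rcases eq_or_lt_of_le hqy with heq | hqy'
      · subst heq
        exact ⟨p, hxp', hpq, dEq_symm' (A1 p hxp' hpq)⟩
      · exact ⟨p, hxp', hpq.trans hqy', dEq_symm' ((Tin2 p q hxp' hpq hqy').1)⟩
  have L2 : ∀ p q p' q', x ≤ p → p < q → q ≤ y → (p ≠ x ∨ q ≠ y) →
      x ≤ p' → p' < q' → q' ≤ y → (p' ≠ x ∨ q' ≠ y) → dEq R p q p' q' := by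
    intro p q p' q' h1 h1' h1'' h1''' g1 g1' g1'' g1'''
    obtain ⟨z, hz1, hz2, hz3⟩ := red p q h1 h1' h1'' h1'''
    obtain ⟨z', hz1', hz2', hz3'⟩ := red p' q' g1 g1' g1'' g1'''
    exact dEq_trans' hz3 (dEq_trans' (A3 z z' hz1 hz2 hz1' hz2') (dEq_symm' hz3'))
  have Lout : ∀ p, x ≤ p → p ≤ y → ∀ w, (w < x ∨ y < w) → ∀ i,
      (R.rel i p w ↔ R.rel i x w) ∧ (R.rel i w p ↔ R.rel i w x) := by
    intro p hxp hpy w hw i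
    rcases eq_or_lt_of_le hxp with heq | hxp'
    · subst heq; exact ⟨Iff.rfl, Iff.rfl⟩
    · rcases eq_or_lt_of_le hpy with heq | hpy'
      · subst heq
        exact ⟨((Tout1 w hw) i).1.symm, ((Tout1 w hw) i).2.symm⟩
      · exact ⟨((Tout2 p w hxp' hpy' hw) i).1.symm, ((Tout2 p w hxp' hpy' hw) i).2.symm⟩
  have Lloop : ∀ p, x ≤ p → p ≤ y → ∀ i, R.rel i p p ↔ R.rel i x x := by
    intro p hxp hpy i
    rcases eq_or_lt_of_le hxp with heq | hxp'
    · subst heq; exact Iff.rfl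
    · rcases eq_or_lt_of_le hpy with heq | hpy'
      · subst heq; exact (T0 i).symm
      · exact ((T1 p hxp' hpy').2.1 i).symm
  -- ============ the shift map ============
  set s : Finset R.V := hF.toFinset with hs_def
  set ch : Finset R.V := insert y (s.filter fun z => x < z ∧ z < y) with hch_def
  have hych : y ∈ ch := Finset.mem_insert_self _ _
  have hch_mem : ∀ c ∈ ch, x < c ∧ c ≤ y := by
    intro c hc
    rcases Finset.mem_insert.mp hc with rfl | hc
    · exact ⟨hlt, le_refl _⟩
    · exact ⟨(Finset.mem_filter.mp hc).2.1, (Finset.mem_filter.mp hc).2.2.le⟩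
  have hch_F : ∀ c ∈ ch, c = y ∨ c ∈ F := by
    intro c hc
    rcases Finset.mem_insert.mp hc with rfl | hc
    · exact Or.inl rfl
    · exact Or.inr (hF.mem_toFinset.mp (Finset.mem_filter.mp hc).1)
  have hfne : ∀ t, (t = x ∨ (x < t ∧ t < y)) → (ch.filter fun c => t < c).Nonempty := by
    intro t ht
    exact ⟨y, Finset.mem_filter.mpr ⟨hych, by rcases ht with rfl | ht; exacts [hlt, ht.2]⟩⟩
  set g : R.V → R.V := shiftFn x y ch with hg_def
  have hg_chain : ∀ t, (t = x ∨ (x < t ∧ t < y)) →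
      g t ∈ ch ∧ t < g t ∧ ∀ c ∈ ch, t < c → g t ≤ c :=
    fun t ht => shiftFn_pos ht (hfne t ht)
  have hg_id : ∀ t, ¬(t = x ∨ (x < t ∧ t < y)) → g t = t := fun t ht => shiftFn_neg ht
  have hcondb : ∀ t, (t = x ∨ (x < t ∧ t < y)) → x ≤ t ∧ t < y := by
    intro t ht
    rcases ht with rfl | ht; exacts [⟨le_refl _, hlt⟩, ⟨ht.1.le, ht.2⟩]
  have hgb : ∀ t, (t = x ∨ (x < t ∧ t < y)) → x < g t ∧ g t ≤ y :=
    fun t ht => hch_mem _ (hg_chain t ht).1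
  have hnocond : ∀ t ∈ insert x F, ¬(t = x ∨ (x < t ∧ t < y)) → t ∈ F ∧ (t < x ∨ y < t) := by
    intro t ht hnc
    push_neg at hnc
    have htF : t ∈ F := by
      rcases ht with rfl | ht
      · exact absurd rfl hnc.1
      · exact ht
    have hty : t ≠ y := fun h => hyF (h ▸ htF)
    refine ⟨htF, ?_⟩
    rcases le_or_gt t x with h | h
    · exact Or.inl (lt_of_le_of_ne h hnc.1)
    · exact Or.inr (lt_of_le_of_ne (hnc.2 h) (Ne.symm hty))
  have hmaps : Set.MapsTo g (insert x F) (insert y F) := by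
    intro t ht
    by_cases hc : t = x ∨ (x < t ∧ t < y)
    · rcases hch_F _ (hg_chain t hc).1 with h | h
      · exact h ▸ Set.mem_insert _ _
      · exact Set.mem_insert_of_mem _ h
    · rw [hg_id t hc]
      exact Set.mem_insert_of_mem _ (hnocond t ht hc).1
  have hmono : ∀ u ∈ insert x F, ∀ v ∈ insert x F, u < v → g u < g v := by
    intro u hu v hv huv
    by_cases cu : u = x ∨ (x < u ∧ u < y) <;> by_cases cv : v = x ∨ (x < v ∧ v < y)
    · -- both in the chain
      have hvF : v ∈ F := by
        rcases Set.mem_insert_iff.mp hv with rfl | hv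
        · exact absurd ((hcondb u cu).1.trans_lt huv) (lt_irrefl _)
        · exact hv
      have hvch : v ∈ ch := by
        rcases cv with rfl | cv
        · exact absurd ((hcondb u cu).1.trans_lt huv) (lt_irrefl _)
        · exact Finset.mem_insert_of_mem (Finset.mem_filter.mpr ⟨hF.mem_toFinset.mpr hvF, cv⟩)
      exact lt_of_le_of_lt ((hg_chain u cu).2.2 v hvch huv) (hg_chain v cv).2.1
    · -- u in chain, v outside
      obtain ⟨hvF, hv'⟩ := hnocond v hv cv
      have hyv : y < v := by
        rcases hv' with hv' | hv'
        · exact absurd (((hcondb u cu).1.trans_lt huv).trans hv') (lt_irrefl _)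
        · exact hv'
      rw [hg_id v cv]
      exact lt_of_le_of_lt (hgb u cu).2 hyv
    · -- u outside, v in chain
      obtain ⟨huF, hu'⟩ := hnocond u hu cu
      have hux : u < x := by
        rcases hu' with hu' | hu'
        · exact hu'
        · exact absurd (hu'.trans (huv.trans_le (hcondb v cv).2.le)) (lt_irrefl y)
      rw [hg_id u cu]
      exact hux.trans (hgb v cv).1
    · rw [hg_id u cu, hg_id v cv]; exact huv
  have hinj : Set.InjOn g (insert x F) := by
    intro u hu v hv h
    by_contra hne'
    rcases lt_or_gt_of_ne hne' with h' | h'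
    · exact (hmono u hu v hv h').ne h
    · exact (hmono v hv u hu h').ne h.symm
  have hcard : (insert y F).ncard ≤ (insert x F).ncard := by
    rw [Set.ncard_insert_of_notMem hyF hF, Set.ncard_insert_of_notMem hxF hF]
  have hsurj : Set.SurjOn g (insert x F) (insert y F) := by
    intro b hb
    obtain ⟨a, ha, hba⟩ := Set.surj_on_of_inj_on_of_ncard_le (s := insert x F)
      (t := insert y F) (fun a _ => g a) (fun a ha => hmaps ha)
      (fun a₁ a₂ h₁ h₂ he => hinj h₁ h₂ he) hcard (hF.insert y) b hb
    exact ⟨a, ha, hba.symm⟩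
  have hbij : Set.BijOn g (insert x F) (insert y F) := ⟨hmaps, hinj, hsurj⟩
  refine ⟨Set.BijOn.equiv g hbij, fun p q => ?_, fun i p q => ?_⟩
  · show R.le p.1 q.1 ↔ R.le (g p.1) (g q.1)
    constructor
    · intro h
      rcases eq_or_lt_of_le (show p.1 ≤ q.1 from h) with heq | h'
      · exact le_of_eq (congrArg g heq)
      · exact (hmono _ p.2 _ q.2 h').le
    · intro h
      by_contra hc
      exact (hmono _ q.2 _ p.2 (lt_of_not_ge hc)).not_ge h
  · show R.rel i p.1 q.1 ↔ R.rel i (g p.1) (g q.1)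
    obtain ⟨u, hu⟩ := p
    obtain ⟨v, hv⟩ := q
    by_cases cu : u = x ∨ (x < u ∧ u < y) <;> by_cases cv : v = x ∨ (x < v ∧ v < y)
    · rcases lt_trichotomy u v with h' | rfl | h'
      · exact (L2 u v (g u) (g v) (hcondb u cu).1 h' (hcondb v cv).2.le
          (Or.inr (hcondb v cv).2.ne) (hgb u cu).1.le (hmono u hu v hv h')
          (hgb v cv).2 (Or.inl (hgb u cu).1.ne') i).1
      · exact (Lloop u (hcondb u cu).1 (hcondb u cu).2.le i).trans
          (Lloop (g u) (hgb u cu).1.le (hgb u cu).2 i).symm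
      · exact (L2 v u (g v) (g u) (hcondb v cv).1 h' (hcondb u cu).2.le
          (Or.inr (hcondb u cu).2.ne) (hgb v cv).1.le (hmono v hv u hu h')
          (hgb u cu).2 (Or.inl (hgb v cv).1.ne') i).2
    · obtain ⟨hvF, hv'⟩ := hnocond v hv cv
      rw [hg_id v cv]
      exact ((Lout u (hcondb u cu).1 (hcondb u cu).2.le v hv' i).1).trans
        ((Lout (g u) (hgb u cu).1.le (hgb u cu).2 v hv' i).1).symm
    · obtain ⟨huF, hu'⟩ := hnocond u hu cu
      rw [hg_id u cu]
      exact ((Lout v (hcondb v cv).1 (hcondb v cv).2.le u hu' i).2).trans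
        ((Lout (g v) (hgb v cv).1.le (hgb v cv).2 u hu' i).2).symm
    · rw [hg_id u cu, hg_id v cv]

end OrdBin

/-- On an ordered binary structure `R`, the equivalence relations
`≃_{≤2,R}` and `≃_R` coincide. -/
theorem eqLe_two_iff_eqR {ι : Type} (R : OrdBin ι) :
    ∀ x y : R.V, OrdBin.EqLe R 2 x y ↔ OrdBin.EqR R x y := by
  intro x y
  constructor
  · intro h2 m F hFfin hcard hxF hyF
    haveI := R.linear
    rcases total_of R.le x y with h | h
    · exact OrdBin.eqF_of_eqLe_two h2 h F hFfin hxF hyF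
    · have h2' : OrdBin.EqLe R 2 y x := fun m' hm' G hG hc hyG hxG =>
        OrdBin.iso_symm' (h2 m' hm' G hG hc hxG hyG)
      exact OrdBin.iso_symm' (OrdBin.eqF_of_eqLe_two h2' h F hFfin hyF hxF)
  · intro h m' _
    exact h m'
end
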